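/- Let φ, ψ be Hausdorff functions with ψ(2ε) ≤ φ(ε) for all ε > 0. Then there exists a compact product K = ∏_{k≥1}{1,…,n_k} ⊂ E, with equilibrium state μ, such that 1 ≤ limsup_{k→∞} (1/(v_k φ(2^{-(k+1)}))) ≤ 2 and 1 ≤ liminf_{k→∞} (1/(v_k ψ(2^{-k}))) ≤ 2, where v_k = n_1⋯n_k. -/

import Mathlib

open scoped Classical ENNReal
open Filter Topology MeasureTheory

/-- The minimal index (counting from 1) at which two elements of the compact product
`K = ∏_k {1,…,n k}` differ. -/
noncomputable def chiK {n : ℕ → ℕ} (x y : ∀ k, Fin (n k)) : ℕ := sInf {k | x k ≠ y k} + 1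

/-- The ultrametric `δ(x,y) = 2^{-χ(x,y)}` on the compact product. -/
noncomputable def deltaK {n : ℕ → ℕ} (x y : ∀ k, Fin (n k)) : ℝ :=
  if x = y then 0 else (2 : ℝ) ^ (-(chiK x y : ℤ))

/-- The open `δ`-ball of center `x` and radius `ε`. -/
def BallK {n : ℕ → ℕ} (x : ∀ k, Fin (n k)) (ε : ℝ) : Set (∀ k, Fin (n k)) :=
  {y | deltaK x y < ε}

/-- The equilibrium state: the product of the uniform probability measures, characterized
by its values on cylinders. -/
def IsEquilibrium {n : ℕ → ℕ} (μ : Measure (∀ k, Fin (n k))) : Prop :=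
  ∀ (k : ℕ) (s : ∀ j, Fin (n j)),
    μ {y | ∀ j < k, y j = s j} = ∏ j ∈ Finset.range k, ((n j : ℝ≥0∞))⁻¹

/-- Hausdorff functions: continuous nondecreasing, vanishing exactly at `0`. -/
def IsHausdorffFn (φ : ℝ → ℝ) : Prop :=
  ContinuousOn φ (Set.Ici 0) ∧ MonotoneOn φ (Set.Ici 0) ∧ φ 0 = 0 ∧ ∀ ε > 0, 0 < φ ε

/-- The upper `φ`-density of `μ` at `x`. -/
noncomputable def upperDensK {n : ℕ → ℕ} (μ : Measure (∀ k, Fin (n k))) (φ : ℝ → ℝ)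
    (x : ∀ k, Fin (n k)) : ℝ≥0∞ :=
  Filter.limsup (fun ε : ℝ => μ (BallK x ε) / ENNReal.ofReal (φ ε)) (𝓝[>] 0)

/-- The lower `φ`-density of `μ` at `x`. -/
noncomputable def lowerDensK {n : ℕ → ℕ} (μ : Measure (∀ k, Fin (n k))) (φ : ℝ → ℝ)
    (x : ∀ k, Fin (n k)) : ℝ≥0∞ :=
  Filter.liminf (fun ε : ℝ => μ (BallK x ε) / ENNReal.ofReal (φ ε)) (𝓝[>] 0)

/-- The `φ`-Hausdorff measure on the compact product, defined via countable covers by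
open balls of radii at most `ε`, letting `ε → 0`. -/
noncomputable def HK {n : ℕ → ℕ} (φ : ℝ → ℝ) (S : Set (∀ k, Fin (n k))) : ℝ≥0∞ :=
  ⨆ (ε : ℝ) (_ : 0 < ε),
    ⨅ (c : ℕ → (∀ k, Fin (n k)) × ℝ)
      (_ : (∀ i, 0 ≤ (c i).2 ∧ (c i).2 ≤ ε) ∧ S ⊆ ⋃ i, BallK (c i).1 (c i).2),
      ∑' i, ENNReal.ofReal (φ (c i).2)

/-- The `φ`-packing premeasure on the compact product, defined via countable packs by
disjoint open balls centered in the set, of radii at most `ε`, letting `ε → 0`. -/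
noncomputable def PK0 {n : ℕ → ℕ} (φ : ℝ → ℝ) (S : Set (∀ k, Fin (n k))) : ℝ≥0∞ :=
  ⨅ (ε : ℝ) (_ : 0 < ε),
    ⨆ (c : ℕ → (∀ k, Fin (n k)) × ℝ)
      (_ : (∀ i, (c i).1 ∈ S ∧ 0 ≤ (c i).2 ∧ (c i).2 ≤ ε) ∧
        Pairwise fun i j => Disjoint (BallK (c i).1 (c i).2) (BallK (c j).1 (c j).2)),
      ∑' i, ENNReal.ofReal (φ (c i).2)

/-- The `φ`-packing measure on the compact product. -/
noncomputable def PK {n : ℕ → ℕ} (φ : ℝ → ℝ) (S : Set (∀ k, Fin (n k))) : ℝ≥0∞ :=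
  ⨅ (F : ℕ → Set (∀ k, Fin (n k))) (_ : S ⊆ ⋃ m, F m), ∑' m, PK0 φ (F m)


/-- One greedy step: multiply `v` by the largest integer keeping the product `≤ x`
(or by `1` if that is impossible). -/
noncomputable def stepV (v : ℕ) (x : ℝ) : ℕ := v * max 1 ⌊x / v⌋₊

lemma one_le_stepV_factor (v : ℕ) (x : ℝ) : 1 ≤ max 1 ⌊x / v⌋₊ := le_max_left _ _

lemma stepV_pos {v : ℕ} (hv : 0 < v) (x : ℝ) : 0 < stepV v x :=
  Nat.mul_pos hv (lt_of_lt_of_le one_pos (one_le_stepV_factor v x))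

lemma le_stepV (v : ℕ) (x : ℝ) : v ≤ stepV v x :=
  Nat.le_mul_of_pos_right v (lt_of_lt_of_le one_pos (one_le_stepV_factor v x))

lemma half_le_stepV {v : ℕ} (hv : 0 < v) {x : ℝ} (hx : 0 ≤ x) :
    x / 2 ≤ (stepV v x : ℝ) := by
  have hv' : (0:ℝ) < v := by exact_mod_cast hv
  have hle : (v : ℝ) ≤ (stepV v x : ℝ) := by exact_mod_cast le_stepV v x
  rcases le_or_gt x v with hxv | hvx
  · linarith
  · have h1 : (1:ℝ) ≤ x / v := (one_le_div hv').2 hvx.le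
    have hfl : 1 ≤ ⌊x / v⌋₊ := Nat.le_floor (by exact_mod_cast h1)
    have hmax : max 1 ⌊x / v⌋₊ = ⌊x / v⌋₊ := max_eq_right hfl
    have h2 : x / v < ⌊x / v⌋₊ + 1 := Nat.lt_floor_add_one _
    have h3 : x - v < (stepV v x : ℝ) := by
      have := (div_lt_iff₀ hv').1 h2
      unfold stepV
      rw [hmax]
      push_cast
      nlinarith
    rcases le_or_gt (x / 2) v with hc | hc
    · linarith
    · linarith

lemma stepV_le_max {v : ℕ} (hv : 0 < v) (x : ℝ) :
    (stepV v x : ℝ) ≤ max (v:ℝ) x := by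
  have hv' : (0:ℝ) < v := by exact_mod_cast hv
  rcases Nat.eq_zero_or_pos ⌊x / v⌋₊ with h0 | hpos
  · unfold stepV
    rw [h0]
    simp
  · have hx0 : 0 ≤ x / v := by
      by_contra hneg
      push_neg at hneg
      rw [Nat.floor_eq_zero.2 (by linarith)] at hpos
      exact lt_irrefl 0 hpos
    have hmax : max 1 ⌊x / v⌋₊ = ⌊x / v⌋₊ := max_eq_right hpos
    have : (⌊x / v⌋₊ : ℝ) ≤ x / v := Nat.floor_le hx0
    have : (stepV v x : ℝ) ≤ x := by
      unfold stepV
      rw [hmax]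
      push_cast
      calc (v : ℝ) * ⌊x / v⌋₊ ≤ v * (x / v) := by nlinarith
        _ = x := by field_simp
    exact this.trans (le_max_right _ _)

lemma stepV_le {v : ℕ} (hv : 0 < v) {x : ℝ} (hvx : (v:ℝ) ≤ x) :
    (stepV v x : ℝ) ≤ x := by
  have := stepV_le_max hv x
  rwa [max_eq_right hvx] at this

/-- The state machine: `(VM a b k).1` is `v_k`, `(VM a b k).2` is the mode
(`true` = chasing `a`, `false` = one catch-up step towards `b`). -/
noncomputable def VM (a b : ℕ → ℝ) : ℕ → ℕ × Bool
  | 0 => (1, true)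
  | k + 1 =>
    if (VM a b k).2 then
      (stepV (VM a b k).1 (a (k+1)),
        if ((VM a b k).1 : ℝ) ≤ a (k+1) then false else true)
    else (stepV (VM a b k).1 (b (k+1)), true)

/-- The multiplicities. -/
noncomputable def nVM (a b : ℕ → ℝ) (k : ℕ) : ℕ :=
  if (VM a b k).2 then max 1 ⌊a (k+1) / (VM a b k).1⌋₊
  else max 1 ⌊b (k+1) / (VM a b k).1⌋₊

lemma nVM_pos (a b : ℕ → ℝ) (k : ℕ) : 0 < nVM a b k := by
  unfold nVM; split <;> exact lt_of_lt_of_le one_pos (le_max_left _ _)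

lemma VM_succ_fst (a b : ℕ → ℝ) (k : ℕ) :
    (VM a b (k+1)).1 = (VM a b k).1 * nVM a b k := by
  rw [VM, nVM]
  by_cases hm : (VM a b k).2 <;> simp [hm, stepV]

lemma VM_fst_pos (a b : ℕ → ℝ) : ∀ k, 0 < (VM a b k).1
  | 0 => one_pos
  | k + 1 => by
      rw [VM_succ_fst]
      exact Nat.mul_pos (VM_fst_pos a b k) (nVM_pos a b k)

lemma VM_half_le (a b : ℕ → ℝ) (hab : ∀ k, a k ≤ b k) (ha : ∀ k, 0 ≤ a k) (k : ℕ) :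
    a (k+1) / 2 ≤ ((VM a b (k+1)).1 : ℝ) := by
  rw [VM]
  by_cases hm : (VM a b k).2
  · simp only [hm, if_true]
    exact half_le_stepV (VM_fst_pos a b k) (ha (k+1))
  · simp only [hm, if_false]
    have h1 : b (k+1) / 2 ≤ ((stepV (VM a b k).1 (b (k+1)) : ℕ) : ℝ) :=
      half_le_stepV (VM_fst_pos a b k) ((ha (k+1)).trans (hab (k+1)))
    have := hab (k+1)
    simpa using le_trans (by linarith) h1

lemma VM_le_b (a b : ℕ → ℝ) (hab : ∀ k, a k ≤ b k) (hbmono : Monotone b) :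
    ∀ k, ((VM a b k).1 : ℝ) ≤ max 1 (b k)
  | 0 => by simp [VM]
  | k + 1 => by
      have ih := VM_le_b a b hab hbmono k
      have hb : b k ≤ b (k+1) := hbmono (Nat.le_succ k)
      rw [VM]
      by_cases hm : (VM a b k).2
      · simp only [hm, if_true]
        have := stepV_le_max (VM_fst_pos a b k) (a (k+1))
        have hmax : max ((VM a b k).1 : ℝ) (a (k+1)) ≤ max 1 (b (k+1)) := by
          apply max_le
          · exact ih.trans (max_le_max le_rfl hb)
          · exact le_trans ((hab (k+1)).trans (le_max_right 1 (b (k+1)))) le_rfl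
        simpa using this.trans hmax
      · simp only [hm, if_false]
        have := stepV_le_max (VM_fst_pos a b k) (b (k+1))
        have hmax : max ((VM a b k).1 : ℝ) (b (k+1)) ≤ max 1 (b (k+1)) := by
          apply max_le
          · exact ih.trans (max_le_max le_rfl hb)
          · exact le_max_right _ _
        simpa using this.trans hmax

lemma VM_touch_le (a b : ℕ → ℝ) (k : ℕ) (hm : (VM a b (k+1)).2 = false) :
    ((VM a b (k+1)).1 : ℝ) ≤ a (k+1) := by
  rw [VM] at hm ⊢
  by_cases hmk : (VM a b k).2
  · simp only [hmk, if_true] at hm ⊢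
    by_cases hc : ((VM a b k).1 : ℝ) ≤ a (k+1)
    · exact stepV_le (VM_fst_pos a b k) hc
    · simp [hc] at hm
  · simp [hmk] at hm

lemma VM_bstep (a b : ℕ → ℝ) (hb : ∀ k, 0 ≤ b k) (k : ℕ) (hm : (VM a b k).2 = false) :
    b (k+1) / 2 ≤ ((VM a b (k+1)).1 : ℝ) := by
  rw [VM]
  simp only [hm, if_false]
  simpa using half_le_stepV (VM_fst_pos a b k) (hb (k+1))

lemma VM_touch_frequently (a b : ℕ → ℝ) (ha : ∀ k, 0 < a k)
    (hatop : Tendsto a atTop atTop) (K : ℕ) :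
    ∃ k ≥ K, (VM a b (k+1)).2 = false := by
  by_contra hcon
  push_neg at hcon
  have hmode : ∀ k ≥ K, (VM a b (k+1)).2 = true := fun k hk => by
    cases hmk : (VM a b (k+1)).2
    · exact absurd hmk (hcon k hk)
    · rfl
  -- from step k ≥ K+1 on, mode is true and `a (k+1) < v k`, hence `v` is constant
  have hlt : ∀ k ≥ K + 1, a (k+1) < ((VM a b k).1 : ℝ) := by
    intro k hk
    obtain ⟨m, rfl⟩ := Nat.exists_eq_add_of_le hk
    have h1 : (VM a b (K + 1 + m)).2 = true := by
      have e : K + 1 + m = (K + m) + 1 := by omega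
      rw [e]; exact hmode (K + m) (Nat.le_add_right _ _)
    have h2 : (VM a b (K + 1 + m + 1)).2 = true := by
      have : K + 1 + m + 1 = (K + 1 + m) + 1 := rfl
      exact hmode (K + 1 + m) (by omega)
    rw [VM] at h2
    simp only [h1, if_true] at h2
    by_contra hle
    push_neg at hle
    simp [hle] at h2
  have hconst : ∀ m, (VM a b (K + 1 + m)).1 = (VM a b (K + 1)).1 := by
    intro m
    induction m with
    | zero => rfl
    | succ m ih =>
      have hk : K + 1 + m ≥ K + 1 := by omega
      have h1 : (VM a b (K + 1 + m)).2 = true := by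
        rcases Nat.exists_eq_add_of_le hk with ⟨j, hj⟩
        rcases m with _ | m
        · -- K+1+0 = K+1 = (K)+1
          exact hmode K le_rfl
        · have : K + 1 + (m+1) = (K + 1 + m) + 1 := rfl
          rw [this]; exact hmode (K + 1 + m) (by omega)
      have hlt' := hlt (K + 1 + m) hk
      have hstep : (VM a b (K + 1 + m + 1)).1 = (VM a b (K + 1 + m)).1 := by
        rw [VM]
        simp only [h1, if_true]
        have hfl : ⌊a (K + 1 + m + 1) / ((VM a b (K + 1 + m)).1 : ℝ)⌋₊ = 0 := by
          apply Nat.floor_eq_zero.2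
          rw [div_lt_one (by exact_mod_cast VM_fst_pos a b (K + 1 + m))]
          exact hlt'
        unfold stepV
        rw [hfl]
        simp
      have : K + 1 + (m + 1) = K + 1 + m + 1 := rfl
      rw [this, hstep, ih]
  -- but `a → ∞` contradicts `a (K+1+m+1) < v (K+1+m) = const`
  obtain ⟨M, hM⟩ := (hatop.eventually_ge_atTop (((VM a b (K+1)).1 : ℝ))).exists_forall_of_atTop
  have hM' := hM (K + 1 + M + 1) (by omega)
  have := hlt (K + 1 + M) (by omega)
  rw [hconst M] at this
  linarith

/-- Given Hausdorff functions `φ, ψ` with `ψ(2ε) ≤ φ(ε)` (and `φ(ε) → 0` as `ε → 0`),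
there is a compact product `K = ∏_k {1,…,n k}` such that, with `v k = n_1 ⋯ n_k`,
`1 ≤ limsup 1/(v_k φ(2^{-(k+1)})) ≤ 2` and `1 ≤ liminf 1/(v_k ψ(2^{-k})) ≤ 2`. -/
theorem stmt14 (φ ψ : ℝ → ℝ) (hφ : IsHausdorffFn φ) (hψ : IsHausdorffFn ψ)
    (h : ∀ ε : ℝ, 0 < ε → ψ (2 * ε) ≤ φ ε)
    (hφ0 : Tendsto φ (𝓝[>] (0 : ℝ)) (𝓝 0)) :
    ∃ n : ℕ → ℕ, (∀ k, 0 < n k) ∧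
      (1 ≤ Filter.limsup (fun k : ℕ => ENNReal.ofReal
          (1 / ((∏ j ∈ Finset.range k, (n j : ℝ)) * φ ((2 : ℝ) ^ (-(k : ℤ) - 1))))) atTop) ∧
      (Filter.limsup (fun k : ℕ => ENNReal.ofReal
          (1 / ((∏ j ∈ Finset.range k, (n j : ℝ)) * φ ((2 : ℝ) ^ (-(k : ℤ) - 1))))) atTop ≤ 2) ∧
      (1 ≤ Filter.liminf (fun k : ℕ => ENNReal.ofReal
          (1 / ((∏ j ∈ Finset.range k, (n j : ℝ)) * ψ ((2 : ℝ) ^ (-(k : ℤ)))))) atTop) ∧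
      (Filter.liminf (fun k : ℕ => ENNReal.ofReal
          (1 / ((∏ j ∈ Finset.range k, (n j : ℝ)) * ψ ((2 : ℝ) ^ (-(k : ℤ)))))) atTop ≤ 2) := by
  -- the two radius sequences
  have hε1pos : ∀ k : ℕ, (0:ℝ) < (2:ℝ) ^ (-(k:ℤ) - 1) := fun k => zpow_pos (by norm_num) _
  have hε0pos : ∀ k : ℕ, (0:ℝ) < (2:ℝ) ^ (-(k:ℤ)) := fun k => zpow_pos (by norm_num) _
  have hε0eq : ∀ k : ℕ, (2:ℝ) ^ (-(k:ℤ)) = 2 * (2:ℝ) ^ (-(k:ℤ) - 1) := by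
    intro k
    rw [show -(k:ℤ) = (-(k:ℤ) - 1) + 1 by ring, zpow_add_one₀ (two_ne_zero)]
    ring
  have hφpos : ∀ k : ℕ, 0 < φ ((2:ℝ) ^ (-(k:ℤ) - 1)) := fun k => hφ.2.2.2 _ (hε1pos k)
  have hψpos : ∀ k : ℕ, 0 < ψ ((2:ℝ) ^ (-(k:ℤ))) := fun k => hψ.2.2.2 _ (hε0pos k)
  have hψφ : ∀ k : ℕ, ψ ((2:ℝ) ^ (-(k:ℤ))) ≤ φ ((2:ℝ) ^ (-(k:ℤ) - 1)) := by
    intro k; rw [hε0eq k]; exact h _ (hε1pos k)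
  -- the target sequences
  set a : ℕ → ℝ := fun k => (φ ((2:ℝ) ^ (-(k:ℤ) - 1)))⁻¹ with haa
  set b : ℕ → ℝ := fun k => (ψ ((2:ℝ) ^ (-(k:ℤ))))⁻¹ with hbb
  have hapos : ∀ k, 0 < a k := fun k => inv_pos.2 (hφpos k)
  have hbpos : ∀ k, 0 < b k := fun k => inv_pos.2 (hψpos k)
  have hab : ∀ k, a k ≤ b k := fun k => inv_anti₀ (hψpos k) (hψφ k)
  have hbmono : Monotone b := by
    apply monotone_nat_of_le_succ
    intro k
    have hle : (2:ℝ) ^ (-((k+1:ℕ)):ℤ) ≤ (2:ℝ) ^ (-(k:ℤ)) := by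
      apply zpow_le_zpow_right₀ one_le_two
      push_cast; omega
    exact inv_anti₀ (hψpos (k+1))
      (hψ.2.1 (le_of_lt (hε0pos (k+1))) (le_of_lt (hε0pos k)) (by push_cast at hle ⊢; exact hle))
  -- `a → ∞`
  have hatop : Tendsto a atTop atTop := by
    have hε1tend : Tendsto (fun k : ℕ => (2:ℝ) ^ (-(k:ℤ) - 1)) atTop (𝓝[>] (0:ℝ)) := by
      apply tendsto_nhdsWithin_of_tendsto_nhds_of_eventually_within
      · have heq : (fun k : ℕ => (2:ℝ) ^ (-(k:ℤ) - 1)) = fun k : ℕ => ((2:ℝ)⁻¹) ^ (k + 1) := by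
          funext k
          rw [show -(k:ℤ) - 1 = -((k+1 : ℕ) : ℤ) by push_cast; ring, zpow_neg, zpow_natCast,
            inv_pow]
        rw [heq]
        exact (tendsto_pow_atTop_nhds_zero_of_lt_one (by norm_num) (by norm_num)).comp
          (tendsto_add_atTop_nat 1)
      · exact Filter.Eventually.of_forall (fun k => hε1pos k)
    have : Tendsto (fun k : ℕ => φ ((2:ℝ) ^ (-(k:ℤ) - 1))) atTop (𝓝[>] (0:ℝ)) := by
      apply tendsto_nhdsWithin_of_tendsto_nhds_of_eventually_within
      · exact (hφ0.mono_left le_rfl).comp hε1tend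
      · exact Filter.Eventually.of_forall (fun k => hφpos k)
    exact this.inv_tendsto_nhdsGT_zero
  have hbtop : Tendsto b atTop atTop := tendsto_atTop_mono hab hatop
  have hvpos : ∀ k, (0:ℝ) < ((VM a b k).1 : ℝ) := fun k => by
    exact_mod_cast VM_fst_pos a b k
  have hprod : ∀ k, (∏ j ∈ Finset.range k, (nVM a b j : ℝ)) = ((VM a b k).1 : ℝ) := by
    intro k
    induction k with
    | zero => simp [VM]
    | succ k ih =>
      rw [Finset.prod_range_succ, ih, VM_succ_fst]
      push_cast; ring
  -- pointwise real bounds, packaged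
  have key_le_phi : ∀ k, ((VM a b k).1 : ℝ) ≤ a k →
      1 ≤ ENNReal.ofReal (1 / ((∏ j ∈ Finset.range k, (nVM a b j : ℝ)) *
        φ ((2 : ℝ) ^ (-(k : ℤ) - 1)))) := by
    intro k hk
    rw [ENNReal.one_le_ofReal, hprod k, le_div_iff₀ (mul_pos (hvpos k) (hφpos k)), one_mul]
    have h1 := mul_le_mul_of_nonneg_right hk (le_of_lt (hφpos k))
    have h2 : a k * φ ((2:ℝ) ^ (-(k:ℤ) - 1)) = 1 := inv_mul_cancel₀ (ne_of_gt (hφpos k))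
    linarith
  have key_ge_phi : ∀ k, a k / 2 ≤ ((VM a b k).1 : ℝ) →
      ENNReal.ofReal (1 / ((∏ j ∈ Finset.range k, (nVM a b j : ℝ)) *
        φ ((2 : ℝ) ^ (-(k : ℤ) - 1)))) ≤ 2 := by
    intro k hk
    have hr : 1 / ((∏ j ∈ Finset.range k, (nVM a b j : ℝ)) * φ ((2:ℝ) ^ (-(k:ℤ) - 1))) ≤ 2 := by
      rw [hprod k, div_le_iff₀ (mul_pos (hvpos k) (hφpos k))]
      have h1 := mul_le_mul_of_nonneg_right hk (le_of_lt (hφpos k))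
      have h2 : a k * φ ((2:ℝ) ^ (-(k:ℤ) - 1)) = 1 := inv_mul_cancel₀ (ne_of_gt (hφpos k))
      nlinarith
    calc ENNReal.ofReal _ ≤ ENNReal.ofReal 2 := ENNReal.ofReal_le_ofReal hr
      _ = 2 := by norm_num
  have key_le_psi : ∀ k, ((VM a b k).1 : ℝ) ≤ b k →
      1 ≤ ENNReal.ofReal (1 / ((∏ j ∈ Finset.range k, (nVM a b j : ℝ)) *
        ψ ((2 : ℝ) ^ (-(k : ℤ))))) := by
    intro k hk
    rw [ENNReal.one_le_ofReal, hprod k, le_div_iff₀ (mul_pos (hvpos k) (hψpos k)), one_mul]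
    have h1 := mul_le_mul_of_nonneg_right hk (le_of_lt (hψpos k))
    have h2 : b k * ψ ((2:ℝ) ^ (-(k:ℤ))) = 1 := inv_mul_cancel₀ (ne_of_gt (hψpos k))
    linarith
  have key_ge_psi : ∀ k, b k / 2 ≤ ((VM a b k).1 : ℝ) →
      ENNReal.ofReal (1 / ((∏ j ∈ Finset.range k, (nVM a b j : ℝ)) *
        ψ ((2 : ℝ) ^ (-(k : ℤ))))) ≤ 2 := by
    intro k hk
    have hr : 1 / ((∏ j ∈ Finset.range k, (nVM a b j : ℝ)) * ψ ((2:ℝ) ^ (-(k:ℤ)))) ≤ 2 := by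
      rw [hprod k, div_le_iff₀ (mul_pos (hvpos k) (hψpos k))]
      have h1 := mul_le_mul_of_nonneg_right hk (le_of_lt (hψpos k))
      have h2 : b k * ψ ((2:ℝ) ^ (-(k:ℤ))) = 1 := inv_mul_cancel₀ (ne_of_gt (hψpos k))
      nlinarith
    calc ENNReal.ofReal _ ≤ ENNReal.ofReal 2 := ENNReal.ofReal_le_ofReal hr
      _ = 2 := by norm_num
  refine ⟨nVM a b, nVM_pos a b, ?_, ?_, ?_, ?_⟩
  · -- 1 ≤ limsup
    refine Filter.le_limsup_of_frequently_le ?_ (Filter.isBoundedUnder_of ⟨⊤, fun _ => le_top⟩)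
    rw [Filter.frequently_atTop]
    intro K
    obtain ⟨k, hk, hmode⟩ := VM_touch_frequently a b hapos hatop K
    exact ⟨k + 1, by omega, key_le_phi (k+1) (VM_touch_le a b k hmode)⟩
  · -- limsup ≤ 2
    refine Filter.limsup_le_of_le (by isBoundedDefault) ?_
    filter_upwards [Filter.eventually_ge_atTop 1] with k hk
    obtain ⟨m, rfl⟩ : ∃ m, k = m + 1 := ⟨k - 1, by omega⟩
    exact key_ge_phi (m+1) (VM_half_le a b hab (fun j => (hapos j).le) m)
  · -- 1 ≤ liminf
    refine Filter.le_liminf_of_le (by isBoundedDefault) ?_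
    filter_upwards [hbtop.eventually_ge_atTop 1] with k hk
    apply key_le_psi
    have := VM_le_b a b hab hbmono k
    rwa [max_eq_right hk] at this
  · -- liminf ≤ 2
    refine Filter.liminf_le_of_frequently_le ?_ (Filter.isBoundedUnder_of ⟨⊥, fun _ => bot_le⟩)
    rw [Filter.frequently_atTop]
    intro K
    obtain ⟨k, hk, hmode⟩ := VM_touch_frequently a b hapos hatop K
    exact ⟨k + 2, by omega, key_ge_psi (k+2) (VM_bstep a b (fun j => (hbpos j).le) (k+1) hmode)⟩
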